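/- Let n ≥ 0 and let k, k_0, k_1, …, k_n be natural numbers, and set N = (k+1) + k_0 + k_1 + ⋯ + k_n. Then the multinomial identity N!/(k_0!⋯k_n!(k+1)!) = C(k_0+k+1, k_0)·(N−1)!/((k_0+k)!·k_1!⋯k_n!) + Σ_{i=1}^{n} C(k_i+k, k_i−1)·(N−1)!/(k_0!⋯(k_i+k)!⋯k_n!) holds, where in the i-th summand the factor C(k_i+k, k_i−1) is taken to be 0 when k_i = 0. -/

import Mathlib

open Finset Nat

/-- For natural numbers `k`, `k₀`, and `k₁,…,kₙ` (given by `K : Fin n → ℕ`),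
with `N = (k+1) + k₀ + k₁ + ⋯ + kₙ`, the multinomial identity
`N!/(k₀!⋯kₙ!(k+1)!) = C(k₀+k+1, k₀)·(N−1)!/((k₀+k)!·k₁!⋯kₙ!)
  + Σᵢ C(kᵢ+k, kᵢ−1)·(N−1)!/(k₀!⋯(kᵢ+k)!⋯kₙ!)`
holds in `ℚ`, where the `i`-th summand is taken to be `0` when `kᵢ = 0`. -/
theorem multinomial_recursion_identity (n k k₀ : ℕ) (K : Fin n → ℕ)
    (N : ℕ) (hN : N = (k + 1) + k₀ + ∑ i, K i) :
    (N ! : ℚ) / ((k₀ ! * ∏ i, (K i)!) * (k + 1)!) =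
      (Nat.choose (k₀ + k + 1) k₀ : ℚ) * (N - 1)! / ((k₀ + k)! * ∏ i, (K i)!)
      + ∑ i, (if K i = 0 then 0 else (Nat.choose (K i + k) (K i - 1) : ℚ)) *
          (N - 1)! / (k₀ ! * ∏ j, (Function.update K i (K i + k) j)!) := by
  have hfac : ∀ m : ℕ, ((m ! : ℚ) ≠ 0) := fun m => by positivity
  have hprod : ∀ i : Fin n, ((∏ j, (K j)! : ℕ) : ℚ) ≠ 0 := fun i => by positivity
  -- rewrite each summand
  have hsummand : ∀ i : Fin n,
      (if K i = 0 then 0 else (Nat.choose (K i + k) (K i - 1) : ℚ)) *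
          (N - 1)! / (k₀ ! * ∏ j, (Function.update K i (K i + k) j)!) =
      (K i : ℚ) * ((N - 1)! / ((k₀ ! * ∏ j, (K j)!) * (k + 1)!)) := by
    intro i
    by_cases h : K i = 0
    · simp [h]
    · simp only [h, if_neg, if_false]
      obtain ⟨m', hm⟩ : ∃ m', K i = m' + 1 := ⟨K i - 1, (Nat.succ_pred_eq_of_pos (Nat.pos_of_ne_zero h)).symm⟩
      rw [hm]
      have hup : (∏ j, (Function.update K i (m' + 1 + k) j)!) =
          (m' + 1 + k)! * ∏ j ∈ univ.erase i, (K j)! := by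
        rw [← Finset.mul_prod_erase univ _ (mem_univ i), Function.update_self]
        congr 1
        exact Finset.prod_congr rfl fun j hj => by
          rw [Function.update_of_ne (Finset.ne_of_mem_erase hj)]
      have hK : (∏ j, (K j)!) = (m' + 1)! * ∏ j ∈ univ.erase i, (K j)! := by
        rw [← Finset.mul_prod_erase univ _ (mem_univ i), hm]
      have hch : ((Nat.choose (m' + 1 + k) (m' + 1 - 1)) : ℚ) =
          (m' + 1 + k)! / ((m' !) * (k + 1)!) := by
        have hle : m' ≤ m' + 1 + k := by omega
        simp only [Nat.add_sub_cancel]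
        rw [Nat.cast_choose ℚ hle, show m' + 1 + k - m' = k + 1 by omega]
      rw [hup, hK, hch]
      have hP : ((∏ j ∈ univ.erase i, (K j)! : ℕ) : ℚ) ≠ 0 := by positivity
      push_cast
      have hm1 : ((m' + 1)! : ℚ) = (m' + 1) * m' ! := by
        push_cast [Nat.factorial_succ]; ring
      rw [hm1]
      field_simp
  rw [Finset.sum_congr rfl fun i _ => hsummand i, ← Finset.sum_mul]
  -- first term
  have hch0 : ((Nat.choose (k₀ + k + 1) k₀) : ℚ) = (k₀ + k + 1) * (k₀ + k)! / (k₀ ! * (k + 1)!) := by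
    have hle : k₀ ≤ k₀ + k + 1 := by omega
    rw [Nat.cast_choose ℚ hle]
    have : k₀ + k + 1 - k₀ = k + 1 := by omega
    rw [this]
    congr 1
    have : (k₀ + k + 1)! = (k₀ + k + 1) * (k₀ + k)! := by
      rw [← Nat.factorial_succ]
    rw [this]; push_cast; ring
  have hNfac : (N ! : ℚ) = N * (N - 1)! := by
    have hN0 : N ≠ 0 := by omega
    rw [← Nat.mul_factorial_pred hN0]
    push_cast; ring
  have hNcast : (N : ℚ) = (k + 1) + k₀ + ∑ i, (K i : ℚ) := by
    rw [hN]; push_cast; ring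
  rw [hNfac, hNcast, hch0]
  have h1 : ((∏ i, (K i)! : ℕ) : ℚ) ≠ 0 := by positivity
  field_simp
  ring
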